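/- Let p and q be C*-seminorms on a commutative unital *-algebra A. The following are equivalent: (a) q is continuous with respect to p; (b) X*_q(A) ⊆ X*_p(A); (c) q ≤ p pointwise. Consequently, q = p if and only if X*_q(A) = X*_p(A). -/

import Mathlib

open UniformSpace (Completion)
open scoped Topology

section Aux
variable {A : Type*} [CommRing A] [Algebra ℂ A] [StarRing A] [StarModule ℂ A]

set_option linter.unusedSectionVars false
namespace CStarSemiAux

/-- star-invariance of a C*-seminorm on a commutative algebra. -/
lemma star_apply (q : Seminorm ℂ A) (hq : ∀ x : A, q (x * star x) = q x ^ 2) (x : A) :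
    q (star x) = q x := by
  have h1 := hq (star x)
  rw [star_star, mul_comm (star x) x, hq x] at h1
  nlinarith [apply_nonneg q x, apply_nonneg q (star x)]

lemma sq_self (q : Seminorm ℂ A) (hq : ∀ x : A, q (x * star x) = q x ^ 2) {y : A}
    (hy : star y = y) : q (y * y) = q y ^ 2 := by
  rw [show y * y = y * star y from by rw [hy], hq]

lemma pow_pow (q : Seminorm ℂ A) (hq : ∀ x : A, q (x * star x) = q x ^ 2) {y : A}
    (hy : star y = y) : ∀ n : ℕ, q (y ^ 2 ^ n) = q y ^ 2 ^ n
  | 0 => by simp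
  | n + 1 => by
    have hsy : star (y ^ 2 ^ n) = y ^ 2 ^ n := by rw [star_pow, hy]
    have h2 : y ^ 2 ^ (n + 1) = (y ^ 2 ^ n) * (y ^ 2 ^ n) := by
      rw [← pow_add, pow_succ 2 n]
      ring_nf
    rw [h2, sq_self q hq hsy, pow_pow q hq hy n, ← pow_mul, ← pow_succ]

/-- the key ε-δ contradiction lemma. -/
lemma le_of_cont (p : Seminorm ℂ A) (hp : ∀ x : A, p (x * star x) = p x ^ 2) (g : A → ℝ)
    (hg_smul : ∀ (c : ℂ) (x : A), g (c • x) = ‖c‖ * g x)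
    (hg_star : ∀ x : A, g (x * star x) = g x ^ 2)
    (hg_pow : ∀ (y : A) (k : ℕ), star y = y → g (y ^ 2 ^ k) = g y ^ 2 ^ k)
    (H : ∀ ε > (0 : ℝ), ∃ δ > (0 : ℝ), ∀ x : A, p x < δ → g x < ε) (x : A) : g x ≤ p x := by
  by_contra hcon
  push_neg at hcon
  have hgx : 0 < g x := lt_of_le_of_lt (apply_nonneg p x) hcon
  set z : A := ((g x : ℂ))⁻¹ • x with hz
  have hnc : ‖((g x : ℂ))⁻¹‖ = (g x)⁻¹ := by
    rw [norm_inv, Complex.norm_real, Real.norm_eq_abs, abs_of_pos hgx]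
  have hgz : g z = 1 := by
    rw [hz, hg_smul, hnc, inv_mul_cancel₀ hgx.ne']
  have hpz : p z < 1 := by
    rw [hz, map_smul_eq_mul, hnc]
    calc (g x)⁻¹ * p x < (g x)⁻¹ * g x := by
          exact mul_lt_mul_of_pos_left hcon (inv_pos.2 hgx)
      _ = 1 := inv_mul_cancel₀ hgx.ne'
  set y : A := z * star z with hy
  have hsy : star y = y := by rw [hy, star_mul, star_star]
  have hgy : g y = 1 := by rw [hy, hg_star, hgz, one_pow]
  have hpy : p y < 1 := by
    rw [hy, hp]
    exact pow_lt_one₀ (apply_nonneg p z) hpz two_ne_zero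
  obtain ⟨δ, hδ, hH⟩ := H 1 one_pos
  obtain ⟨n, hn⟩ := exists_pow_lt_of_lt_one hδ hpy
  have h2n : p y ^ 2 ^ n ≤ p y ^ n :=
    pow_le_pow_of_le_one (apply_nonneg p y) hpy.le (Nat.le_of_lt (Nat.lt_two_pow_self))
  have hlt : p (y ^ 2 ^ n) < δ := by
    rw [pow_pow p hp hsy]
    exact lt_of_le_of_lt h2n hn
  have := hH _ hlt
  rw [hg_pow y n hsy, hgy, one_pow] at this
  exact lt_irrefl 1 this

lemma pcont_iff (q : Seminorm ℂ A) (hq : ∀ x : A, q (x * star x) = q x ^ 2)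
    (χ : A →⋆ₐ[ℂ] ℂ) :
    (∀ ε > (0 : ℝ), ∃ δ > (0 : ℝ), ∀ x : A, q x < δ → ‖χ x‖ < ε) ↔ ∀ x : A, ‖χ x‖ ≤ q x := by
  constructor
  · intro H x
    refine le_of_cont q hq (fun a => ‖χ a‖) ?_ ?_ ?_ H x
    · intro c a; show ‖χ (c • a)‖ = _; rw [map_smul, norm_smul]
    · intro a; show ‖χ (a * star a)‖ = _; rw [map_mul, map_star, Complex.star_def, norm_mul, RingHomIsometric.norm_map, sq]
    · intro y k _; show ‖χ (y ^ 2 ^ k)‖ = _; rw [map_pow, norm_pow]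
  · intro h ε hε
    exact ⟨ε, hε, fun x hx => lt_of_le_of_lt (h x) hx⟩

end CStarSemiAux
end Aux
namespace CStarSemiAux2
open CStarSemiAux
variable {A : Type*} [CommRing A] [Algebra ℂ A] [StarRing A] [StarModule ℂ A]
variable (q : Seminorm ℂ A) (hq : ∀ x : A, q (x * star x) = q x ^ 2)

include hq

lemma mul_le_two {a b : A} (ha : star a = a) (hb : star b = b)
    (ha1 : q a ≤ 1) (hb1 : q b ≤ 1) : q (a * b) ≤ 2 := by
  have key : (4 : ℂ) • (a * b) = (a + b) * (a + b) - (a - b) * (a - b) := by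
    rw [Algebra.smul_def, map_ofNat]
    ring
  have h4 : q ((4 : ℂ) • (a * b)) = 4 * q (a * b) := by
    rw [map_smul_eq_mul]
    norm_num
  have hsab : star (a + b) = a + b := by rw [star_add, ha, hb]
  have hssb : star (a - b) = a - b := by rw [star_sub, ha, hb]
  have h1 : q ((a + b) * (a + b)) ≤ 4 := by
    rw [sq_self q hq hsab]
    have : q (a + b) ≤ 2 := le_trans (map_add_le_add q a b) (by linarith)
    nlinarith [apply_nonneg q (a + b)]
  have h2 : q ((a - b) * (a - b)) ≤ 4 := by
    rw [sq_self q hq hssb]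
    have : q (a - b) ≤ 2 := le_trans (map_sub_le_add q a b) (by linarith)
    nlinarith [apply_nonneg q (a - b)]
  have h3 : q ((a + b) * (a + b) - (a - b) * (a - b)) ≤ 8 :=
    le_trans (map_sub_le_add q _ _) (by linarith)
  rw [← key, h4] at h3
  linarith

lemma mul_le_one {a b : A} (ha : star a = a) (hb : star b = b)
    (ha1 : q a ≤ 1) (hb1 : q b ≤ 1) : q (a * b) ≤ 1 := by
  by_contra h
  push_neg at h
  obtain ⟨n, hn⟩ := pow_unbounded_of_one_lt (2 : ℝ) h
  have hab : star (a * b) = a * b := by rw [star_mul, ha, hb, mul_comm]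
  have hn2 : q (a * b) ^ n ≤ q (a * b) ^ 2 ^ n :=
    pow_le_pow_right₀ h.le (Nat.le_of_lt (Nat.lt_two_pow_self))
  have hpa : star (a ^ 2 ^ n) = a ^ 2 ^ n := by rw [star_pow, ha]
  have hpb : star (b ^ 2 ^ n) = b ^ 2 ^ n := by rw [star_pow, hb]
  have hqa : q (a ^ 2 ^ n) ≤ 1 := by
    rw [pow_pow q hq ha]; exact pow_le_one₀ (apply_nonneg q a) ha1
  have hqb : q (b ^ 2 ^ n) ≤ 1 := by
    rw [pow_pow q hq hb]; exact pow_le_one₀ (apply_nonneg q b) hb1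
  have h2 : q ((a * b) ^ 2 ^ n) ≤ 2 := by
    rw [mul_pow]
    exact mul_le_two q hq hpa hpb hqa hqb
  rw [pow_pow q hq hab] at h2
  linarith

lemma mul_le_sa {a b : A} (ha : star a = a) (hb : star b = b) :
    q (a * b) ≤ q a * q b := by
  have hkey : ∀ ε > (0 : ℝ), q (a * b) ≤ (q a + ε) * (q b + ε) := by
    intro ε hε
    set ca : ℂ := ((q a + ε : ℝ) : ℂ)⁻¹ with hca
    set cb : ℂ := ((q b + ε : ℝ) : ℂ)⁻¹ with hcb
    have hqa : 0 < q a + ε := lt_of_lt_of_le hε (by nlinarith [apply_nonneg q a])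
    have hqb : 0 < q b + ε := lt_of_lt_of_le hε (by nlinarith [apply_nonneg q b])
    have hnca : ‖ca‖ = (q a + ε)⁻¹ := by
      rw [hca, norm_inv, Complex.norm_real, Real.norm_eq_abs, abs_of_pos hqa]
    have hncb : ‖cb‖ = (q b + ε)⁻¹ := by
      rw [hcb, norm_inv, Complex.norm_real, Real.norm_eq_abs, abs_of_pos hqb]
    have hsa' : star (ca • a) = ca • a := by
      rw [star_smul, ha, hca, star_inv₀, Complex.star_def, Complex.conj_ofReal]
    have hsb' : star (cb • b) = cb • b := by
      rw [star_smul, hb, hcb, star_inv₀, Complex.star_def, Complex.conj_ofReal]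
    have hqa' : q (ca • a) ≤ 1 := by
      rw [map_smul_eq_mul, hnca]
      rw [inv_mul_le_iff₀ hqa]
      nlinarith
    have hqb' : q (cb • b) ≤ 1 := by
      rw [map_smul_eq_mul, hncb]
      rw [inv_mul_le_iff₀ hqb]
      nlinarith
    have h1 : q ((ca • a) * (cb • b)) ≤ 1 := mul_le_one q hq hsa' hsb' hqa' hqb'
    have h2 : (ca • a) * (cb • b) = (ca * cb) • (a * b) := by
      rw [smul_mul_smul_comm]
    rw [h2, map_smul_eq_mul, norm_mul, hnca, hncb] at h1
    have h3 : q (a * b) = (q a + ε) * (q b + ε) * ((q a + ε)⁻¹ * ((q b + ε)⁻¹ * q (a * b))) := by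
      field_simp
    rw [h3]
    calc (q a + ε) * (q b + ε) * ((q a + ε)⁻¹ * ((q b + ε)⁻¹ * q (a * b)))
        ≤ (q a + ε) * (q b + ε) * 1 := by
          apply mul_le_mul_of_nonneg_left _ (by positivity)
          rw [← mul_assoc]
          exact h1
      _ = (q a + ε) * (q b + ε) := mul_one _
  have hlim : Filter.Tendsto (fun ε : ℝ => (q a + ε) * (q b + ε)) (𝓝[>] 0)
      (𝓝 (q a * q b)) := by
    have : Filter.Tendsto (fun ε : ℝ => (q a + ε) * (q b + ε)) (𝓝 0) (𝓝 ((q a + 0) * (q b + 0))) := by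
      exact ((tendsto_const_nhds.add Filter.tendsto_id).mul (tendsto_const_nhds.add Filter.tendsto_id))
    simpa using this.mono_left nhdsWithin_le_nhds
  exact ge_of_tendsto hlim (eventually_nhdsWithin_of_forall fun ε hε => hkey ε hε)

lemma mul_le (x y : A) : q (x * y) ≤ q x * q y := by
  have hsx : star (x * star x) = x * star x := by rw [star_mul, star_star]
  have hsy : star (y * star y) = y * star y := by rw [star_mul, star_star]
  have h1 : q (x * y) ^ 2 = q ((x * star x) * (y * star y)) := by
    rw [← hq (x * y)]
    congr 1
    rw [star_mul]
    ring
  have h2 : q ((x * star x) * (y * star y)) ≤ q x ^ 2 * q y ^ 2 := by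
    calc q ((x * star x) * (y * star y)) ≤ q (x * star x) * q (y * star y) :=
          mul_le_sa q hq hsx hsy
      _ = q x ^ 2 * q y ^ 2 := by rw [hq, hq]
  nlinarith [apply_nonneg q (x * y), apply_nonneg q x, apply_nonneg q y,
    mul_nonneg (apply_nonneg q x) (apply_nonneg q y)]

end CStarSemiAux2
section Pkg
open CStarSemiAux CStarSemiAux2

variable {A : Type*} [CommRing A] [Algebra ℂ A] [StarRing A] [StarModule ℂ A]

/-- A bundled C*-seminorm. -/
structure CStarPkg (A : Type*) [CommRing A] [Algebra ℂ A] [StarRing A] [StarModule ℂ A] where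
  q : Seminorm ℂ A
  cstar : ∀ x : A, q (x * star x) = q x ^ 2

namespace CStarPkg

variable (s : CStarPkg A)

/-- Type synonym carrying the seminormed structure. -/
def Carrier (s : CStarPkg A) : Type _ := A

instance : CommRing s.Carrier := inferInstanceAs (CommRing A)
instance : StarRing s.Carrier := inferInstanceAs (StarRing A)
instance : Algebra ℂ s.Carrier := inferInstanceAs (Algebra ℂ A)
instance : StarModule ℂ s.Carrier := inferInstanceAs (StarModule ℂ A)

noncomputable instance : SeminormedCommRing s.Carrier :=
  { AddGroupSeminorm.toSeminormedAddCommGroup (E := s.Carrier) (s.q.toAddGroupSeminorm),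
    (inferInstance : CommRing s.Carrier) with
    norm_mul_le := fun a b => mul_le s.q s.cstar a b }

noncomputable instance : NormedAlgebra ℂ s.Carrier :=
  { (inferInstance : Algebra ℂ s.Carrier) with
    norm_smul_le := fun c x => by
      show s.q (c • x) ≤ ‖c‖ * s.q x
      exact le_of_eq (map_smul_eq_mul s.q c (show A from x)) }

/-- The identity, as a map `A → s.Carrier`. -/
def of (s : CStarPkg A) (x : A) : s.Carrier := x

lemma norm_of (x : A) : ‖s.of x‖ = s.q x := rfl

lemma uc_star : UniformContinuous (star : s.Carrier → s.Carrier) := by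
  refine Isometry.uniformContinuous ?_
  refine AddMonoidHomClass.isometry_of_norm (starAddEquiv : s.Carrier ≃+ s.Carrier) ?_
  intro x
  exact star_apply s.q s.cstar x

noncomputable instance : Star (Completion s.Carrier) := ⟨Completion.map star⟩

lemma star_coe (x : s.Carrier) :
    star ((x : Completion s.Carrier)) = ((star x : s.Carrier) : Completion s.Carrier) :=
  Completion.map_coe s.uc_star x

lemma continuous_star' : Continuous (star : Completion s.Carrier → Completion s.Carrier) :=
  Completion.continuous_map

noncomputable instance : StarRing (Completion s.Carrier) where
  star_involutive a := by
    induction a using Completion.induction_on with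
    | hp => exact isClosed_eq (s.continuous_star'.comp s.continuous_star') continuous_id
    | ih x => rw [star_coe, star_coe, star_star]
  star_mul a b := by
    induction a, b using Completion.induction_on₂ with
    | hp =>
      apply isClosed_eq
      · exact s.continuous_star'.comp continuous_mul
      · exact ((s.continuous_star'.comp continuous_snd).mul
          (s.continuous_star'.comp continuous_fst))
    | ih x y =>
      rw [← Completion.coe_mul, star_coe, star_coe, star_coe, star_mul, Completion.coe_mul]
  star_add a b := by
    induction a, b using Completion.induction_on₂ with
    | hp =>
      apply isClosed_eq
      · exact s.continuous_star'.comp continuous_add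
      · exact ((s.continuous_star'.comp continuous_fst).add
          (s.continuous_star'.comp continuous_snd))
    | ih x y =>
      rw [← Completion.coe_add, star_coe, star_coe, star_coe, star_add, Completion.coe_add]

instance : ContinuousStar (Completion s.Carrier) := ⟨s.continuous_star'⟩

noncomputable instance : StarModule ℂ (Completion s.Carrier) where
  star_smul c a := by
    induction a using Completion.induction_on with
    | hp =>
      exact isClosed_eq (s.continuous_star'.comp (continuous_const_smul c))
        ((continuous_const_smul _).comp s.continuous_star')
    | ih x => rw [← Completion.coe_smul, star_coe, star_coe, ← Completion.coe_smul, star_smul]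

instance : CStarRing (Completion s.Carrier) where
  norm_mul_self_le b := by
    have h : ∀ a : Completion s.Carrier, ‖star a * a‖ = ‖a‖ * ‖a‖ := by
      intro a
      induction a using Completion.induction_on with
      | hp =>
        apply isClosed_eq
        · exact continuous_norm.comp ((s.continuous_star'.mul continuous_id))
        · exact continuous_norm.mul continuous_norm
      | ih x =>
        rw [star_coe, ← Completion.coe_mul, Completion.norm_coe, Completion.norm_coe]
        change s.q (star x * x) = s.q x * s.q x
        rw [mul_comm]; exact (s.cstar (show A from x)).trans (sq _)
    rw [h b]

noncomputable instance : CommCStarAlgebra (Completion s.Carrier) :=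
  { (inferInstance : NormedCommRing (Completion s.Carrier)),
    (inferInstance : StarRing (Completion s.Carrier)),
    (inferInstance : CStarRing (Completion s.Carrier)),
    (inferInstance : CompleteSpace (Completion s.Carrier)),
    (inferInstance : NormedAlgebra ℂ (Completion s.Carrier)),
    (inferInstance : StarModule ℂ (Completion s.Carrier)) with }

/-- The canonical star algebra homomorphism `A →⋆ₐ[ℂ] Completion s.Carrier`. -/
noncomputable def toB (s : CStarPkg A) : A →⋆ₐ[ℂ] Completion s.Carrier where
  toFun x := ((s.of x : s.Carrier) : Completion s.Carrier)
  map_one' := by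
    show ((1 : s.Carrier) : Completion s.Carrier) = 1
    exact Completion.coe_one _
  map_mul' x y := by
    show ((s.of x * s.of y : s.Carrier) : Completion s.Carrier) = _
    exact Completion.coe_mul _ _
  map_zero' := by
    show ((0 : s.Carrier) : Completion s.Carrier) = 0
    exact Completion.coe_zero
  map_add' x y := by
    show ((s.of x + s.of y : s.Carrier) : Completion s.Carrier) = _
    exact Completion.coe_add _ _
  commutes' c := by
    show ((algebraMap ℂ s.Carrier c : s.Carrier) : Completion s.Carrier) = _
    exact (Completion.algebraMap_def s.Carrier ℂ c).symm
  map_star' x := by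
    show ((star (s.of x) : s.Carrier) : Completion s.Carrier) = star _
    exact (s.star_coe (s.of x)).symm

lemma norm_toB (x : A) : ‖s.toB x‖ = s.q x := by
  rw [show s.toB x = ((s.of x : s.Carrier) : Completion s.Carrier) from rfl,
    Completion.norm_coe]
  rfl

end CStarPkg
end Pkg
section Char
variable {A : Type*} [CommRing A] [Algebra ℂ A] [StarRing A] [StarModule ℂ A]

open WeakDual UniformSpace in
lemma CStarPkg.exists_char (s : CStarPkg A) (h1 : s.q 1 = 1) (x : A) :
    ∃ χ : A →⋆ₐ[ℂ] ℂ, (∀ a : A, ‖χ a‖ ≤ s.q a) ∧ ‖χ x‖ = s.q x := by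
  have hnorm1 : ‖(1 : Completion s.Carrier)‖ = 1 := by
    rw [← Completion.coe_one s.Carrier, Completion.norm_coe]
    exact h1
  haveI : Nontrivial (Completion s.Carrier) := by
    refine ⟨1, 0, fun h => ?_⟩
    rw [h, norm_zero] at hnorm1
    exact one_ne_zero hnorm1.symm
  haveI : NormOneClass (Completion s.Carrier) := ⟨hnorm1⟩
  set y : Completion s.Carrier := s.toB (x * star x) with hy
  have hsa : IsSelfAdjoint y := by
    rw [IsSelfAdjoint, hy, ← map_star]
    congr 1
    rw [star_mul, star_star]
  obtain ⟨z, hz, hz2⟩ := spectrum.exists_nnnorm_eq_spectralRadius (a := y)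
  rw [hsa.spectralRadius_eq_nnnorm] at hz2
  have hznorm : ‖z‖ = ‖y‖ := by
    have := ENNReal.coe_inj.mp hz2
    exact congrArg NNReal.toReal this
  obtain ⟨φ, hφ⟩ := WeakDual.CharacterSpace.mem_spectrum_iff_exists.mp hz
  refine ⟨{ toFun := fun a => φ (s.toB a)
            map_one' := by show φ (s.toB 1) = 1; rw [map_one, map_one]
            map_mul' := fun a b => by show φ (s.toB (a * b)) = _; rw [map_mul, map_mul]
            map_zero' := by show φ (s.toB 0) = 0; rw [map_zero, map_zero]
            map_add' := fun a b => by show φ (s.toB (a + b)) = _; rw [map_add, map_add]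
            commutes' := fun c => by
              show φ (s.toB (algebraMap ℂ A c)) = _
              rw [AlgHomClass.commutes s.toB c, AlgHomClass.commutes φ c]
            map_star' := fun a => by
              show φ (s.toB (star a)) = star (φ (s.toB a))
              rw [map_star, map_star] }, ?_, ?_⟩
  · intro a
    calc ‖φ (s.toB a)‖ ≤ ‖s.toB a‖ :=
          spectrum.norm_le_norm_of_mem (WeakDual.CharacterSpace.apply_mem_spectrum φ _)
      _ = s.q a := s.norm_toB a
  · show ‖φ (s.toB x)‖ = s.q x
    have hyx : y = s.toB x * star (s.toB x) := by rw [hy, map_mul, map_star]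
    have hsq : ‖φ (s.toB x)‖ * ‖φ (s.toB x)‖ = ‖φ y‖ := by
      rw [hyx, map_mul, map_star, norm_mul, Complex.star_def, RingHomIsometric.norm_map]
    have hφy : ‖φ y‖ = s.q x ^ 2 := by
      rw [hφ, hznorm, hy, s.norm_toB, s.cstar]
    rw [hφy] at hsq
    nlinarith [norm_nonneg (φ (s.toB x)), apply_nonneg s.q x]
end Char

/-- `p`-continuity of a Hermitian character (ε-δ form of continuity w.r.t. the seminorm `p`). -/
def PCont {A : Type*} [CommRing A] [Algebra ℂ A] [StarRing A] [StarModule ℂ A]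
    (p : Seminorm ℂ A) (χ : A →⋆ₐ[ℂ] ℂ) : Prop :=
  ∀ ε > (0 : ℝ), ∃ δ > (0 : ℝ), ∀ x : A, p x < δ → ‖χ x‖ < ε

section Main
variable {A : Type*} [CommRing A] [Algebra ℂ A] [StarRing A] [StarModule ℂ A]

open CStarSemiAux CStarSemiAux2 in
lemma subset_imp_le (p q : Seminorm ℂ A)
    (hp : ∀ x : A, p (x * star x) = p x ^ 2) (hq : ∀ x : A, q (x * star x) = q x ^ 2)
    (hsub : {χ : A →⋆ₐ[ℂ] ℂ | PCont q χ} ⊆ {χ : A →⋆ₐ[ℂ] ℂ | PCont p χ}) (x : A) :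
    q x ≤ p x := by
  have hq1 : q 1 = 0 ∨ q 1 = 1 := by
    have h := hq 1
    rw [star_one, mul_one] at h
    have h2 : q 1 * (q 1 - 1) = 0 := by nlinarith
    rcases mul_eq_zero.mp h2 with h3 | h3
    · exact Or.inl h3
    · exact Or.inr (by linarith)
  rcases hq1 with h0 | h1
  · have : q x ≤ q x * q 1 := by
      calc q x = q (x * 1) := by rw [mul_one]
        _ ≤ q x * q 1 := mul_le q hq x 1
    rw [h0, mul_zero] at this
    exact le_trans this (apply_nonneg p x)
  · obtain ⟨χ, hχle, hχx⟩ := CStarPkg.exists_char ⟨q, hq⟩ h1 x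
    have hmem : χ ∈ {χ : A →⋆ₐ[ℂ] ℂ | PCont q χ} := (pcont_iff q hq χ).mpr hχle
    have hP : PCont p χ := hsub hmem
    have hle := (pcont_iff p hp χ).mp hP
    calc q x = ‖χ x‖ := hχx.symm
      _ ≤ p x := hle x
end Main

/-- for C*-seminorms `p`, `q`: `q` is `p`-continuous ↔ `X*_q(A) ⊆ X*_p(A)`
↔ `q ≤ p` pointwise; and `q = p ↔ X*_q(A) = X*_p(A)`. -/
theorem cstar_seminorm_comparison {A : Type*} [CommRing A] [Algebra ℂ A] [StarRing A]
    [StarModule ℂ A] (p q : Seminorm ℂ A)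
    (hp : ∀ x : A, p (x * star x) = p x ^ 2) (hq : ∀ x : A, q (x * star x) = q x ^ 2) :
    ((∀ ε > (0 : ℝ), ∃ δ > (0 : ℝ), ∀ x : A, p x < δ → q x < ε) ↔
      {χ : A →⋆ₐ[ℂ] ℂ | PCont q χ} ⊆ {χ : A →⋆ₐ[ℂ] ℂ | PCont p χ}) ∧
    (({χ : A →⋆ₐ[ℂ] ℂ | PCont q χ} ⊆ {χ : A →⋆ₐ[ℂ] ℂ | PCont p χ}) ↔ ∀ x : A, q x ≤ p x) ∧
    (q = p ↔ {χ : A →⋆ₐ[ℂ] ℂ | PCont q χ} = {χ : A →⋆ₐ[ℂ] ℂ | PCont p χ}) := by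
  have hca : (∀ x : A, q x ≤ p x) → (∀ ε > (0 : ℝ), ∃ δ > (0 : ℝ), ∀ x : A, p x < δ → q x < ε) :=
    fun h ε hε => ⟨ε, hε, fun x hx => lt_of_le_of_lt (h x) hx⟩
  have hab : (∀ ε > (0 : ℝ), ∃ δ > (0 : ℝ), ∀ x : A, p x < δ → q x < ε) →
      {χ : A →⋆ₐ[ℂ] ℂ | PCont q χ} ⊆ {χ : A →⋆ₐ[ℂ] ℂ | PCont p χ} := by
    intro ha χ hχ ε hε
    obtain ⟨δ₁, hδ₁, h1⟩ := hχ ε hε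
    obtain ⟨δ, hδ, h2⟩ := ha δ₁ hδ₁
    exact ⟨δ, hδ, fun x hx => h1 x (h2 x hx)⟩
  have hbc := subset_imp_le p q hp hq
  refine ⟨⟨hab, fun hb => hca (hbc hb)⟩, ⟨hbc, fun hc => hab (hca hc)⟩, ?_⟩
  constructor
  · intro h; rw [h]
  · intro h
    ext x
    exact le_antisymm (hbc (le_of_eq h) x) (subset_imp_le q p hq hp (le_of_eq h.symm) x)
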